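/- Let μ be a probability measure supported on a compact set F ⊂ ℝ \ [-1,1], and define v(z;μ) = ∫ log|1 - φ(z)φ(t)| dμ(t) for z ∈ ℂ \ [-1,1]. Then v(z;μ) = -(1/2) U^{β_E(μ) + τ_E}(z) + C for some constant C, where β_E(μ) is the balayage of μ onto E = [-1,1], τ_E is the arcsine measure of E, and U^ν(z) = ∫ log(1/|z-t|) dν(t) is the logarithmic potential. -/

import Mathlib

open MeasureTheory Complex Filter Topology intervalIntegral

/-- The branch of `(z^2-1)^(1/2)` on `ℂ \ [-1,1]` with `(z^2-1)^(1/2)/z → 1` at `∞`. -/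
noncomputable def sqrtBr (z : ℂ) : ℂ := z * (1 - (z⁻¹) ^ 2) ^ ((1 : ℂ) / 2)

/-- The inverse Joukowsky map `φ(z) = z + (z^2-1)^(1/2)` (with `|φ| > 1` off `[-1,1]`). -/
noncomputable def phi (z : ℂ) : ℂ := z + sqrtBr z

/-- The segment `E = [-1,1] ⊂ ℂ`. -/
def Eseg : Set ℂ := {z : ℂ | z.im = 0 ∧ z.re ∈ Set.Icc (-1 : ℝ) 1}

/-- The logarithmic potential `U^ν(z) = ∫ log(1/|z-t|) dν(t)` of a measure `ν` on `ℝ`. -/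
noncomputable def Upot (ν : Measure ℝ) (z : ℂ) : ℝ :=
  ∫ t, Real.log (1 / ‖z - (t : ℂ)‖) ∂ν

/-- The logarithmic potential of the arcsine measure `dτ_E = (1/π)(1-x²)^{-1/2} dx`. -/
noncomputable def Utau (z : ℂ) : ℝ :=
  ∫ x in Set.Ioo (-1 : ℝ) 1,
    Real.log (1 / ‖z - (x : ℂ)‖) / (Real.pi * Real.sqrt (1 - x ^ 2))

/-- The Green function of `ℂ̄ \ [-1,1]`: `g_E(z,t) = log(|1-φ(z)φ(t)|/|φ(z)-φ(t)|)`. -/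
noncomputable def gE (z t : ℂ) : ℝ :=
  Real.log (‖1 - phi z * phi t‖ / ‖phi z - phi t‖)


namespace S19


lemma ne_of_not_Eseg {z : ℂ} (hz : z ∉ Eseg) : z ≠ 0 ∧ z ≠ 1 ∧ z ≠ -1 := by
  refine ⟨?_, ?_, ?_⟩ <;> rintro rfl <;> exact hz ⟨by simp, by norm_num⟩

lemma u_ne {z : ℂ} (hz : z ∉ Eseg) : 1 - (z⁻¹) ^ 2 ≠ 0 := by
  obtain ⟨h0, h1, h2⟩ := ne_of_not_Eseg hz
  intro h
  have hz2 : z ^ 2 = 1 := by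
    have h2 : (z⁻¹) ^ 2 = 1 := by linear_combination -h
    have hzz : z * z⁻¹ = 1 := mul_inv_cancel₀ h0
    calc z ^ 2 = z ^ 2 * (z⁻¹) ^ 2 := by rw [h2, mul_one]
      _ = (z * z⁻¹) ^ 2 := by ring
      _ = 1 := by rw [hzz]; norm_num
  have : (z - 1) * (z + 1) = 0 := by linear_combination hz2
  rcases mul_eq_zero.1 this with h | h
  · exact h1 (by linear_combination h)
  · exact h2 (by linear_combination h)

lemma sqrt_half_sq {w : ℂ} (hw : w ≠ 0) : (w ^ ((1:ℂ)/2)) ^ 2 = w := by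
  rw [sq, ← Complex.cpow_add _ _ hw]
  norm_num

lemma sq_sqrtBr {z : ℂ} (hz : z ∉ Eseg) : sqrtBr z ^ 2 = z ^ 2 - 1 := by
  obtain ⟨h0, -, -⟩ := ne_of_not_Eseg hz
  have h := sqrt_half_sq (u_ne hz)
  unfold sqrtBr
  rw [mul_pow, h]
  field_simp

/-- The principal square root has nonnegative real part. -/
lemma re_sqrt_nonneg (w : ℂ) : 0 ≤ (w ^ ((1:ℂ)/2)).re := by
  rcases eq_or_ne w 0 with rfl | hw
  · simp [Complex.zero_cpow (by norm_num : (1:ℂ)/2 ≠ 0)]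
  · rw [Complex.cpow_def_of_ne_zero hw, Complex.exp_re]
    apply mul_nonneg (Real.exp_nonneg _)
    apply Real.cos_nonneg_of_mem_Icc
    have harg := Complex.arg_mem_Ioc w
    have hpi := Real.pi_pos
    have h1 : (Complex.log w * ((1:ℂ)/2)).im = w.arg / 2 := by
      simp [Complex.mul_im, Complex.log_im, Complex.log_re]
      ring
    rw [h1]
    constructor
    · nlinarith [harg.1]
    · nlinarith [harg.2]

lemma quad {z : ℂ} (hz : z ∉ Eseg) : phi z ^ 2 - 2 * z * phi z + 1 = 0 := by
  have h := sq_sqrtBr hz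
  unfold phi
  linear_combination h

lemma normSq_one_sub_sq (z : ℂ) :
    Complex.normSq (1 - z ^ 2) = (1 - Complex.normSq z) ^ 2 + 4 * z.im ^ 2 := by
  simp [Complex.normSq_apply, pow_two, Complex.mul_re, Complex.mul_im, Complex.sub_re,
    Complex.sub_im, Complex.one_re, Complex.one_im]
  ring

lemma one_lt_abs_phi {z : ℂ} (hz : z ∉ Eseg) : 1 < ‖phi z‖ := by
  obtain ⟨h0, -, -⟩ := ne_of_not_Eseg hz
  set s := sqrtBr z with hs
  -- |s|^2 = |z^2-1|
  have hs2 : Complex.normSq s = ‖1 - z ^ 2‖ := by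
    have : ‖s ^ 2‖ = ‖1 - z ^ 2‖ := by
      rw [sq_sqrtBr hz]
      rw [← norm_neg]
      ring_nf
    rw [norm_pow] at this
    rw [← Complex.sq_norm, this]
  -- re (z * conj s) ≥ 0
  have hre : 0 ≤ (z * (starRingEnd ℂ) s).re := by
    have : z * (starRingEnd ℂ) s = (Complex.normSq z : ℂ) * (starRingEnd ℂ) ((1 - (z⁻¹) ^ 2) ^ ((1:ℂ)/2)) := by
      rw [hs]; unfold sqrtBr
      rw [map_mul, ← mul_assoc, Complex.mul_conj]
    rw [this]
    rw [Complex.re_ofReal_mul]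
    refine mul_nonneg (Complex.normSq_nonneg z) ?_
    rw [Complex.conj_re]
    exact re_sqrt_nonneg _
  have key : 1 < Complex.normSq z + ‖1 - z ^ 2‖ := by
    have hid := normSq_one_sub_sq z
    have habs : ‖1 - z ^ 2‖ ^ 2 = Complex.normSq (1 - z ^ 2) := Complex.sq_norm _
    have hnn : 0 ≤ ‖1 - z ^ 2‖ := norm_nonneg _
    rcases eq_or_ne z.im 0 with him | him
    · -- z real, |z.re| > 1
      have : ¬ (z.re ∈ Set.Icc (-1:ℝ) 1) := fun h => hz ⟨him, h⟩
      simp only [Set.mem_Icc, not_and_or, not_le] at this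
      have h1 : 1 < z.re ^ 2 := by rcases this with h | h <;> nlinarith
      have : Complex.normSq z = z.re ^ 2 + z.im ^ 2 := by simp [Complex.normSq_apply]; ring
      nlinarith
    · nlinarith [sq_nonneg (1 - Complex.normSq z - ‖1 - z ^ 2‖), pow_two_pos_of_ne_zero him]
  have hphi : ‖phi z‖ ^ 2 = Complex.normSq z + Complex.normSq s + 2 * (z * (starRingEnd ℂ) s).re := by
    rw [Complex.sq_norm]
    exact Complex.normSq_add z s
  nlinarith [norm_nonneg (phi z)]


lemma phi_ne_zero {z : ℂ} (hz : z ∉ Eseg) : phi z ≠ 0 := by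
  intro h
  have := one_lt_abs_phi hz
  rw [h] at this; simp at this; linarith

lemma two_point {z w : ℂ} (hz : z ∉ Eseg) (hw : w ∉ Eseg) :
    (phi z - phi w) * (phi z * phi w - 1) = 2 * (z - w) * phi z * phi w := by
  linear_combination (phi w) * quad hz - (phi z) * quad hw

lemma abs_one_sub_pos {z w : ℂ} (hz : z ∉ Eseg) (hw : w ∉ Eseg) :
    0 < ‖1 - phi z * phi w‖ := by
  have h1 := one_lt_abs_phi hz
  have h2 := one_lt_abs_phi hw
  have h3 : ‖phi z * phi w‖ - ‖(1 : ℂ)‖ ≤ ‖phi z * phi w - 1‖ := norm_sub_norm_le _ _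
  simp only [norm_mul, norm_one] at h3
  calc (0:ℝ) < ‖phi z‖ * ‖phi w‖ - 1 := by nlinarith
    _ ≤ ‖phi z * phi w - 1‖ := h3
    _ = ‖1 - phi z * phi w‖ := by rw [← norm_neg]; ring_nf

lemma log_split {z w : ℂ} (hz : z ∉ Eseg) (hw : w ∉ Eseg) (hzw : z ≠ w) :
    2 * Real.log (‖1 - phi z * phi w‖) =
      gE z w + Real.log 2 + Real.log (‖z - w‖) +
        Real.log (‖phi z‖) + Real.log (‖phi w‖) := by
  have hA : 0 < ‖1 - phi z * phi w‖ := abs_one_sub_pos hz hw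
  have hAz : 0 < ‖phi z‖ := lt_trans one_pos (one_lt_abs_phi hz)
  have hAw : 0 < ‖phi w‖ := lt_trans one_pos (one_lt_abs_phi hw)
  have hE : 0 < ‖z - w‖ := by
    rw [norm_pos_iff]
    exact sub_ne_zero.2 hzw
  have hnum : 0 < 2 * ‖z - w‖ * ‖phi z‖ * ‖phi w‖ :=
    mul_pos (mul_pos (mul_pos two_pos hE) hAz) hAw
  have habs : ‖phi z - phi w‖ * ‖1 - phi z * phi w‖ =
      2 * ‖z - w‖ * ‖phi z‖ * ‖phi w‖ := by
    have h := congrArg (fun x : ℂ => ‖x‖) (two_point hz hw)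
    rw [norm_mul, norm_mul, norm_mul, norm_mul, Complex.norm_two] at h
    rw [show ‖1 - phi z * phi w‖ = ‖phi z * phi w - 1‖ from
      norm_sub_rev 1 (phi z * phi w)]
    exact h
  have hD : ‖phi z - phi w‖ =
      2 * ‖z - w‖ * ‖phi z‖ * ‖phi w‖ /
        ‖1 - phi z * phi w‖ := by
    rw [eq_div_iff (ne_of_gt hA)]
    exact habs
  have hgE : gE z w = Real.log (‖1 - phi z * phi w‖) -
      Real.log (‖phi z - phi w‖) :=
    Real.log_div (ne_of_gt hA) (by rw [hD]; exact ne_of_gt (div_pos hnum hA))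
  rw [hgE, hD, Real.log_div (ne_of_gt hnum) (ne_of_gt hA),
    Real.log_mul (ne_of_gt (mul_pos (mul_pos two_pos hE) hAz)) (ne_of_gt hAw),
    Real.log_mul (ne_of_gt (mul_pos two_pos hE)) (ne_of_gt hAz),
    Real.log_mul (by norm_num) (ne_of_gt hE)]
  ring

lemma abs_exp_mul_I (θ : ℝ) : ‖Complex.exp ((θ : ℂ) * I)‖ = 1 :=
  Complex.norm_exp_ofReal_mul_I θ

lemma cos_factor {z : ℂ} (hz : z ∉ Eseg) (θ : ℝ) :
    Real.log (1 / ‖z - (Real.cos θ : ℂ)‖) =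
      Real.log 2 + Real.log (‖phi z‖) -
        Real.log (‖phi z - Complex.exp ((θ : ℂ) * I)‖) -
        Real.log (‖phi z - Complex.exp (-(θ : ℂ) * I)‖) := by
  have hAz : 1 < ‖phi z‖ := one_lt_abs_phi hz
  have hprod : Complex.exp ((θ : ℂ) * I) * Complex.exp (-(θ : ℂ) * I) = 1 := by
    rw [← Complex.exp_add]
    norm_num
  have hcos : Complex.exp ((θ : ℂ) * I) + Complex.exp (-(θ : ℂ) * I) = 2 * (Real.cos θ : ℂ) := by
    rw [Complex.ofReal_cos, Complex.cos]
    ring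
  have hiden : (z - (Real.cos θ : ℂ)) * (2 * phi z) =
      (phi z - Complex.exp ((θ : ℂ) * I)) * (phi z - Complex.exp (-(θ : ℂ) * I)) := by
    linear_combination -quad hz - hprod + phi z * hcos
  have he1 : 0 < ‖phi z - Complex.exp ((θ : ℂ) * I)‖ := by
    rw [norm_pos_iff, sub_ne_zero]
    intro h
    rw [h, abs_exp_mul_I] at hAz
    linarith
  have he2 : 0 < ‖phi z - Complex.exp (-(θ : ℂ) * I)‖ := by
    rw [norm_pos_iff, sub_ne_zero]
    intro h
    have : ‖Complex.exp (-(θ : ℂ) * I)‖ = 1 := by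
      rw [show (-(θ : ℂ) * I) = ((-θ : ℝ) : ℂ) * I by push_cast; ring]
      exact abs_exp_mul_I (-θ)
    rw [h, this] at hAz
    linarith
  have habs := congrArg (fun x : ℂ => ‖x‖) hiden
  rw [norm_mul, norm_mul, norm_mul, Complex.norm_two] at habs
  have h2a : (0:ℝ) < 2 * ‖phi z‖ := by linarith
  have hzc : ‖z - (Real.cos θ : ℂ)‖ =
      ‖phi z - Complex.exp ((θ : ℂ) * I)‖ *
        ‖phi z - Complex.exp (-(θ : ℂ) * I)‖ / (2 * ‖phi z‖) := by
    rw [eq_div_iff (ne_of_gt h2a)]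
    exact habs
  rw [one_div, Real.log_inv, hzc,
    Real.log_div (ne_of_gt (mul_pos he1 he2)) (ne_of_gt h2a),
    Real.log_mul (ne_of_gt he1) (ne_of_gt he2),
    Real.log_mul (by norm_num) (by linarith : ‖phi z‖ ≠ 0)]
  ring
section MeanValue
variable {a : ℂ} (ha : 1 < ‖a‖)

lemma sub_exp_ne (ha : 1 < ‖a‖) (w : ℂ) (hw : ‖w‖ = 1) : a - w ≠ 0 := by
  intro h
  have : a = w := by linear_combination h
  rw [this, hw] at ha; linarith

lemma contG (ha : 1 < ‖a‖) :
    Continuous fun θ : ℝ => Real.log (‖a - Complex.exp ((θ : ℂ) * I)‖) := by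
  have hc : Continuous fun θ : ℝ => ‖a - Complex.exp ((θ : ℂ) * I)‖ := by
    apply continuous_norm.comp
    exact continuous_const.sub (Complex.continuous_exp.comp (Complex.continuous_ofReal.mul continuous_const))
  rw [continuous_iff_continuousAt]
  intro θ
  apply (Real.continuousAt_log ?_).comp hc.continuousAt
  exact norm_ne_zero_iff.2 (sub_exp_ne ha _ (Complex.norm_exp_ofReal_mul_I θ))

lemma circle_zero (ha : 1 < ‖a‖) :
    ∫ θ in (0:ℝ)..(2 * Real.pi), Real.log (‖1 - Complex.exp ((θ : ℂ) * I) / a‖) = 0 := by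
  have ha0 : a ≠ 0 := by
    intro h; rw [h] at ha; simp at ha; linarith
  -- the auxiliary holomorphic function
  set f : ℂ → ℂ := fun w => Complex.log (1 - w / a) with hf
  have hslit : ∀ w : ℂ, ‖w‖ ≤ 1 → (1 - w / a) ∈ Complex.slitPlane := by
    intro w hw
    rw [Complex.mem_slitPlane_iff]
    left
    have h1 : (w / a).re ≤ ‖w / a‖ := Complex.re_le_norm _
    have h2 : ‖w / a‖ = ‖w‖ / ‖a‖ := norm_div _ _
    have h3 : ‖w‖ / ‖a‖ < 1 := by
      rw [div_lt_one (by linarith)]; linarith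
    simp only [Complex.sub_re, Complex.one_re]
    linarith [h1, h2 ▸ h1]
  have hdiff : DifferentiableOn ℂ f (closure (Metric.ball (0:ℂ) 1)) := by
    intro w hw
    rw [closure_ball (0:ℂ) one_ne_zero, Metric.mem_closedBall, dist_zero_right] at hw
    apply DifferentiableAt.differentiableWithinAt
    apply DifferentiableAt.clog
    · exact (differentiable_const _).differentiableAt.sub ((differentiable_id.differentiableAt).div_const _)
    · exact hslit w hw
  have hint := hdiff.diffContOnCl.circleIntegral_sub_inv_smul
    (w := 0) (by simp [Metric.mem_ball])
  have hf0 : f 0 = 0 := by simp [hf]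
  rw [hf0, smul_zero] at hint
  -- unfold circle integral
  have hunf : (∮ z in C((0 : ℂ), 1), (z - 0)⁻¹ • f z)
      = ∫ θ in (0:ℝ)..(2 * Real.pi), I • f (Complex.exp ((θ : ℂ) * I)) := by
    rw [circleIntegral]
    apply intervalIntegral.integral_congr
    intro θ _
    have hcm : circleMap 0 1 θ = Complex.exp ((θ : ℂ) * I) := by
      simp [circleMap]
    show deriv (circleMap 0 1) θ • (circleMap 0 1 θ - 0)⁻¹ • f (circleMap 0 1 θ)
      = I • f (Complex.exp ((θ : ℂ) * I))
    rw [deriv_circleMap, hcm]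
    have hne : Complex.exp ((θ : ℂ) * I) ≠ 0 := Complex.exp_ne_zero _
    rw [sub_zero, smul_eq_mul, smul_eq_mul, smul_eq_mul]
    field_simp
  rw [hunf, intervalIntegral.integral_smul] at hint
  have hI : (I : ℂ) ≠ 0 := Complex.I_ne_zero
  have hzero : (∫ θ in (0:ℝ)..(2 * Real.pi), f (Complex.exp ((θ : ℂ) * I))) = 0 := by
    rcases smul_eq_zero.1 hint with h | h
    · exact absurd h hI
    · exact h
  -- take real parts
  have hcont : Continuous fun θ : ℝ => f (Complex.exp ((θ : ℂ) * I)) := by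
    rw [continuous_iff_continuousAt]
    intro θ
    apply ContinuousAt.clog
    · exact (continuous_const.sub ((Complex.continuous_exp.comp
        (Complex.continuous_ofReal.mul continuous_const)).div_const _)).continuousAt
    · exact hslit _ (le_of_eq (Complex.norm_exp_ofReal_mul_I θ))
  have hii : IntervalIntegrable (fun θ : ℝ => f (Complex.exp ((θ : ℂ) * I)))
      MeasureTheory.volume 0 (2 * Real.pi) := hcont.intervalIntegrable _ _
  have hre := Complex.reCLM.intervalIntegral_comp_comm hii
  rw [hzero] at hre
  simp only [Complex.reCLM_apply] at hre
  rw [show (0:ℂ).re = 0 from rfl] at hre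
  calc ∫ θ in (0:ℝ)..(2 * Real.pi), Real.log (‖1 - Complex.exp ((θ : ℂ) * I) / a‖)
      = ∫ θ in (0:ℝ)..(2 * Real.pi), (f (Complex.exp ((θ : ℂ) * I))).re := by
        apply intervalIntegral.integral_congr
        intro θ _
        rw [hf]
        exact (Complex.log_re _).symm
    _ = 0 := hre

lemma circle_mean (ha : 1 < ‖a‖) :
    (∫ θ in (0:ℝ)..(2 * Real.pi), Real.log (‖a - Complex.exp ((θ : ℂ) * I)‖))
      = 2 * Real.pi * Real.log (‖a‖) := by
  have ha0 : ‖a‖ ≠ 0 := by linarith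
  have haa : a ≠ 0 := norm_ne_zero_iff.1 ha0
  have hpt : ∀ θ : ℝ, Real.log (‖a - Complex.exp ((θ : ℂ) * I)‖) =
      Real.log (‖a‖) + Real.log (‖1 - Complex.exp ((θ : ℂ) * I) / a‖) := by
    intro θ
    have h1 : a - Complex.exp ((θ : ℂ) * I) = a * (1 - Complex.exp ((θ : ℂ) * I) / a) := by
      field_simp
    rw [h1, norm_mul, Real.log_mul ha0]
    intro h
    have := sub_exp_ne ha (Complex.exp ((θ : ℂ) * I)) (Complex.norm_exp_ofReal_mul_I θ)
    apply this
    rw [h1]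
    rw [norm_eq_zero] at h
    rw [h, mul_zero]
  calc (∫ θ in (0:ℝ)..(2 * Real.pi), Real.log (‖a - Complex.exp ((θ : ℂ) * I)‖))
      = ∫ θ in (0:ℝ)..(2 * Real.pi), (Real.log (‖a‖) +
          Real.log (‖1 - Complex.exp ((θ : ℂ) * I) / a‖)) := by
        apply intervalIntegral.integral_congr
        intro θ _
        exact hpt θ
    _ = (∫ θ in (0:ℝ)..(2 * Real.pi), Real.log (‖a‖)) +
          ∫ θ in (0:ℝ)..(2 * Real.pi), Real.log (‖1 - Complex.exp ((θ : ℂ) * I) / a‖) := by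
        apply intervalIntegral.integral_add
        · exact intervalIntegrable_const
        · -- continuity
          have : Continuous fun θ : ℝ => Real.log (‖1 - Complex.exp ((θ : ℂ) * I) / a‖) := by
            rw [continuous_iff_continuousAt]
            intro θ
            apply (Real.continuousAt_log ?_).comp
            · exact (continuous_norm.comp (continuous_const.sub
                ((Complex.continuous_exp.comp (Complex.continuous_ofReal.mul
                  continuous_const)).div_const _))).continuousAt
            · rw [norm_ne_zero_iff]
              intro h
              apply sub_exp_ne ha (Complex.exp ((θ : ℂ) * I)) (Complex.norm_exp_ofReal_mul_I θ)
              have : a - Complex.exp ((θ : ℂ) * I) = a * (1 - Complex.exp ((θ : ℂ) * I) / a) := by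
                field_simp
              rw [this, h, mul_zero]
          exact this.intervalIntegrable _ _
    _ = 2 * Real.pi * Real.log (‖a‖) := by
        rw [circle_zero ha, intervalIntegral.integral_const, add_zero, sub_zero, smul_eq_mul]

end MeanValue


lemma cos_image : Real.cos '' Set.Ioo 0 Real.pi = Set.Ioo (-1:ℝ) 1 := by
  have hpi := Real.pi_pos
  ext y
  constructor
  · rintro ⟨θ, hθ, rfl⟩
    have h1 : Real.cos θ < Real.cos 0 :=
      Real.strictAntiOn_cos ⟨le_refl 0, hpi.le⟩ ⟨hθ.1.le, hθ.2.le⟩ hθ.1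
    have h2 : Real.cos Real.pi < Real.cos θ :=
      Real.strictAntiOn_cos ⟨hθ.1.le, hθ.2.le⟩ ⟨hpi.le, le_refl _⟩ hθ.2
    rw [Real.cos_zero] at h1
    rw [Real.cos_pi] at h2
    exact ⟨h2, h1⟩
  · intro hy
    refine ⟨Real.arccos y, ⟨Real.arccos_pos.2 hy.2, ?_⟩, Real.cos_arccos hy.1.le hy.2.le⟩
    rcases lt_or_eq_of_le (Real.arccos_le_pi y) with h | h
    · exact h
    · exfalso
      have : y = -1 := by rw [← Real.cos_arccos hy.1.le hy.2.le, h, Real.cos_pi]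
      linarith [hy.1]

lemma Utau_eq {z : ℂ} (hz : z ∉ Eseg) :
    Utau z = Real.log 2 - Real.log (‖phi z‖) := by
  have hpi := Real.pi_pos
  have hA1 : 1 < ‖phi z‖ := one_lt_abs_phi hz
  have hmeas : MeasurableSet (Set.Ioo (0:ℝ) Real.pi) := measurableSet_Ioo
  have hderiv : ∀ θ ∈ Set.Ioo (0:ℝ) Real.pi,
      HasDerivWithinAt Real.cos (-Real.sin θ) (Set.Ioo 0 Real.pi) θ :=
    fun θ _ => (Real.hasDerivAt_cos θ).hasDerivWithinAt
  have hinj : Set.InjOn Real.cos (Set.Ioo 0 Real.pi) :=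
    Real.strictAntiOn_cos.injOn.mono Set.Ioo_subset_Icc_self
  have hchg := MeasureTheory.integral_image_eq_integral_abs_deriv_smul hmeas hderiv hinj
    (fun x => Real.log (1 / ‖z - (x:ℂ)‖) / (Real.pi * Real.sqrt (1 - x ^ 2)))
  rw [cos_image] at hchg
  have heq : Set.EqOn
      (fun θ => |(-Real.sin θ)| • (Real.log (1 / ‖z - ((Real.cos θ : ℝ):ℂ)‖) /
        (Real.pi * Real.sqrt (1 - Real.cos θ ^ 2))))
      (fun θ => Real.log (1 / ‖z - (Real.cos θ : ℂ)‖) / Real.pi)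
      (Set.Ioo 0 Real.pi) := by
    intro θ hθ
    have hs : 0 < Real.sin θ := Real.sin_pos_of_pos_of_lt_pi hθ.1 hθ.2
    have h1 : Real.sqrt (1 - Real.cos θ ^ 2) = Real.sin θ := by
      rw [show (1 - Real.cos θ ^ 2) = Real.sin θ ^ 2 by nlinarith [Real.sin_sq_add_cos_sq θ]]
      exact Real.sqrt_sq hs.le
    simp only [h1, abs_neg, abs_of_pos hs, smul_eq_mul]
    field_simp
  unfold Utau
  rw [hchg, MeasureTheory.setIntegral_congr_fun hmeas heq]
  have h2 : (∫ θ in Set.Ioo (0:ℝ) Real.pi,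
        Real.log (1 / ‖z - (Real.cos θ : ℂ)‖) / Real.pi)
      = ∫ θ in (0:ℝ)..Real.pi, Real.log (1 / ‖z - (Real.cos θ : ℂ)‖) / Real.pi := by
    rw [intervalIntegral.integral_of_le hpi.le, MeasureTheory.integral_Ioc_eq_integral_Ioo]
  rw [h2]
  set A := Real.log (‖phi z‖) with hA
  set G : ℝ → ℝ := fun θ => Real.log (‖phi z - Complex.exp ((θ:ℂ) * I)‖) with hG
  have hGcont : Continuous G := contG hA1
  have hGncont : Continuous fun θ : ℝ => G (-θ) := hGcont.comp continuous_neg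
  have hpteq : Set.EqOn (fun θ : ℝ => Real.log (1 / ‖z - (Real.cos θ : ℂ)‖) / Real.pi)
      (fun θ : ℝ => ((Real.log 2 + A) - G θ - G (-θ)) / Real.pi)
      (Set.uIcc (0:ℝ) Real.pi) := by
    intro θ _
    have hcf := cos_factor hz θ
    have hneg : Real.log (‖phi z - Complex.exp (-(θ:ℂ) * I)‖) = G (-θ) := by
      rw [hG]
      simp only []
      rw [show (((-θ : ℝ)):ℂ) * I = -(θ:ℂ) * I by push_cast; ring]
    simp only []
    rw [hcf, hneg]
  rw [intervalIntegral.integral_congr hpteq, intervalIntegral.integral_div]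
  have hsub : (∫ θ in (0:ℝ)..Real.pi, ((Real.log 2 + A) - G θ - G (-θ)))
      = Real.pi * (Real.log 2 + A) - (∫ θ in (0:ℝ)..Real.pi, G θ)
        - (∫ θ in (0:ℝ)..Real.pi, G (-θ)) := by
    rw [intervalIntegral.integral_sub
        (intervalIntegrable_const.sub (hGcont.intervalIntegrable _ _))
        (hGncont.intervalIntegrable _ _),
      intervalIntegral.integral_sub intervalIntegrable_const (hGcont.intervalIntegrable _ _),
      intervalIntegral.integral_const, smul_eq_mul, sub_zero]
  have hneg : (∫ θ in (0:ℝ)..Real.pi, G (-θ)) = ∫ θ in (-Real.pi)..(0:ℝ), G θ := by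
    have := intervalIntegral.integral_comp_neg (a := 0) (b := Real.pi) G
    simpa using this
  have hadj : (∫ θ in (-Real.pi)..(0:ℝ), G θ) + (∫ θ in (0:ℝ)..Real.pi, G θ)
      = ∫ θ in (-Real.pi)..Real.pi, G θ :=
    intervalIntegral.integral_add_adjacent_intervals
      (hGcont.intervalIntegrable _ _) (hGcont.intervalIntegrable _ _)
  have hper : Function.Periodic G (2 * Real.pi) := by
    intro θ
    rw [hG]
    simp only []
    congr 2
    rw [show (((θ + 2 * Real.pi : ℝ)):ℂ) * I = (θ:ℂ) * I + 2 * Real.pi * I by push_cast; ring]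
    rw [Complex.exp_add, Complex.exp_two_pi_mul_I, mul_one]
  have hshift : (∫ θ in (-Real.pi)..Real.pi, G θ) = ∫ θ in (0:ℝ)..(2*Real.pi), G θ := by
    have := hper.intervalIntegral_add_eq (-Real.pi) 0
    rw [show -Real.pi + 2 * Real.pi = Real.pi by ring, zero_add] at this
    exact this
  have hmean : (∫ θ in (0:ℝ)..(2*Real.pi), G θ) = 2 * Real.pi * A := circle_mean hA1
  have hI2 : (∫ θ in (-Real.pi)..(0:ℝ), G θ) = 2 * Real.pi * A - (∫ θ in (0:ℝ)..Real.pi, G θ) := by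
    rw [← hmean, ← hshift, ← hadj]
    ring
  rw [hsub, hneg, hI2]
  field_simp
  ring



lemma log_abs_bound {c C r : ℝ} (hc : 0 < c) (h1 : c ≤ r) (h2 : r ≤ C) :
    |Real.log r| ≤ |Real.log c| + |Real.log C| := by
  have hr : 0 < r := lt_of_lt_of_le hc h1
  have ha : Real.log c ≤ Real.log r := Real.log_le_log hc h1
  have hb : Real.log r ≤ Real.log C := Real.log_le_log hr h2
  rw [abs_le]
  constructor
  · nlinarith [neg_abs_le (Real.log c), abs_nonneg (Real.log C)]
  · nlinarith [le_abs_self (Real.log C), abs_nonneg (Real.log c)]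

lemma ae_mem_of_measure_one (μ : Measure ℝ) [IsProbabilityMeasure μ] {S : Set ℝ}
    (hSm : MeasurableSet S) (hμS : μ S = 1) : ∀ᵐ t ∂μ, t ∈ S := by
  rw [MeasureTheory.ae_iff]
  have h : {a : ℝ | ¬ a ∈ S} = Sᶜ := rfl
  rw [h, measure_compl hSm (measure_ne_top μ S), hμS, measure_univ]
  simp

lemma integrable_helper {S : Set ℝ} (hSc : IsCompact S) (μ : Measure ℝ)
    [IsProbabilityMeasure μ] (hμS : μ S = 1) {f : ℝ → ℝ} (hf : ContinuousOn f S) :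
    Integrable f μ := by
  have hSm : MeasurableSet S := hSc.measurableSet
  have hae := ae_mem_of_measure_one μ hSm hμS
  have hio : IntegrableOn f S μ := hf.integrableOn_compact hSc
  have hind : Integrable (S.indicator f) μ := (integrable_indicator_iff hSm).2 hio
  exact hind.congr (hae.mono fun t ht => Set.indicator_of_mem ht f)



lemma one_lt_sq_of_not_Icc {x : ℝ} (hx : x ∉ Set.Icc (-1:ℝ) 1) : 1 < x ^ 2 := by
  simp only [Set.mem_Icc, not_and_or, not_le] at hx
  rcases hx with h | h <;> nlinarith

lemma ofReal_not_Eseg {x : ℝ} (hx : x ∉ Set.Icc (-1:ℝ) 1) : ((x:ℝ):ℂ) ∉ Eseg := by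
  intro h
  exact hx (by simpa using h.2)

lemma phi_contAt {x : ℝ} (hx : x ∉ Set.Icc (-1:ℝ) 1) : ContinuousAt phi ((x:ℝ):ℂ) := by
  have hx2 : 1 < x ^ 2 := one_lt_sq_of_not_Icc hx
  have hx0 : x ≠ 0 := by intro h; rw [h] at hx2; norm_num at hx2
  have hx0C : ((x:ℝ):ℂ) ≠ 0 := by exact_mod_cast Complex.ofReal_ne_zero.2 hx0
  have hslit : (1 - (((x:ℝ):ℂ)⁻¹)^2) ∈ Complex.slitPlane := by
    rw [Complex.mem_slitPlane_iff]
    left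
    have hcast : (1 - (((x:ℝ):ℂ)⁻¹)^2) = (((1 - (x⁻¹)^2 : ℝ)):ℂ) := by push_cast; ring
    rw [hcast, Complex.ofReal_re]
    have : (x⁻¹)^2 = (x^2)⁻¹ := by rw [inv_pow]
    rw [this]
    have h1 : (x^2)⁻¹ < 1 := by
      rw [inv_lt_one_iff₀]
      right; exact hx2
    linarith
  have hinner : ContinuousAt (fun w : ℂ => 1 - (w⁻¹)^2) ((x:ℝ):ℂ) :=
    continuousAt_const.sub ((continuousAt_id.inv₀ hx0C).pow 2)
  have hcpow : ContinuousAt (fun w : ℂ => (1 - (w⁻¹)^2) ^ ((1:ℂ)/2)) ((x:ℝ):ℂ) :=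
    ContinuousAt.cpow hinner continuousAt_const hslit
  unfold phi sqrtBr
  exact continuousAt_id.add (continuousAt_id.mul hcpow)

lemma phi_real_contOn {S : Set ℝ} (hS : ∀ x ∈ S, x ∉ Set.Icc (-1:ℝ) 1) :
    ContinuousOn (fun t : ℝ => phi ((t:ℝ):ℂ)) S := by
  intro t ht
  exact (ContinuousAt.comp (phi_contAt (hS t ht)) Complex.continuous_ofReal.continuousAt).continuousWithinAt


lemma abs_one_sub_bounds (u v : ℂ) (hu : 1 ≤ ‖u‖) :
    ‖v‖ - 1 ≤ ‖1 - u * v‖ ∧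
      ‖1 - u * v‖ ≤ 1 + ‖u‖ * ‖v‖ := by
  have h4 : ‖u * v - 1‖ = ‖1 - u * v‖ := by
    rw [← norm_neg]; ring_nf
  constructor
  · have h3 : ‖u * v‖ - ‖(1:ℂ)‖ ≤ ‖u * v - 1‖ := norm_sub_norm_le _ _
    simp only [norm_mul, norm_one] at h3
    rw [h4] at h3
    have h5 : ‖v‖ ≤ ‖u‖ * ‖v‖ :=
      le_mul_of_one_le_left (norm_nonneg v) hu
    linarith
  · have h3 : ‖(1:ℂ) - u * v‖ ≤ ‖(1:ℂ)‖ + ‖u * v‖ := norm_sub_le _ _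
    simp only [norm_mul, norm_one] at h3
    linarith


end S19

open S19

/-- Let `μ` be a probability measure on a compact `F ⊂ ℝ \ [-1,1]` and let `ν = β_E(μ)` be
its balayage onto `E = [-1,1]`, characterized by `G^μ_E = U^μ - U^ν + const` off `E`.
Then `v(z;μ) := ∫ log|1 - φ(z)φ(t)| dμ(t) = -(1/2) U^{ν + τ_E}(z) + C` on `ℂ \ [-1,1]`. -/
theorem statement19 (F : Set ℝ) (hFc : IsCompact F)
    (hFE : ∀ x ∈ F, x ∉ Set.Icc (-1 : ℝ) 1)
    (μ ν : Measure ℝ) [IsProbabilityMeasure μ] [IsProbabilityMeasure ν]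
    (hμF : μ F = 1) (hνE : ν (Set.Icc (-1 : ℝ) 1) = 1)
    (hbal : ∃ c₀ : ℝ, ∀ z : ℂ, z ∉ Eseg →
      (∫ t, gE z (t : ℂ) ∂μ) = Upot μ z - Upot ν z + c₀) :
    ∃ C : ℝ, ∀ z : ℂ, z ∉ Eseg →
      (∫ t, Real.log (‖1 - phi z * phi (t : ℂ)‖) ∂μ) =
        -(1 / 2) * (Upot ν z + Utau z) + C := by
  obtain ⟨c₀, hbal⟩ := hbal
  have hFm : MeasurableSet F := hFc.measurableSet
  have haeF : ∀ᵐ t ∂μ, t ∈ F := ae_mem_of_measure_one μ hFm hμF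
  have hnotE : ∀ t ∈ F, ((t:ℝ):ℂ) ∉ Eseg := fun t ht => ofReal_not_Eseg (hFE t ht)
  have hcPhiF : ContinuousOn (fun t : ℝ => phi ((t:ℝ):ℂ)) F := phi_real_contOn hFE
  set K := ∫ t, Real.log (‖phi ((t:ℝ):ℂ)‖) ∂μ with hK
  set C := (c₀ + 2 * Real.log 2 + K) / 2 with hC
  have i3 : Integrable (fun t : ℝ => Real.log (‖phi ((t:ℝ):ℂ)‖)) μ := by
    apply integrable_helper hFc μ hμF
    intro t ht
    exact (hcPhiF t ht).norm.log
      (ne_of_gt (lt_trans one_pos (one_lt_abs_phi (hnotE t ht))))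
  -- main identity at non-real z
  have key : ∀ z : ℂ, z ∉ Eseg → z.im ≠ 0 →
      (∫ t, Real.log (‖1 - phi z * phi ((t:ℝ):ℂ)‖) ∂μ) =
        -(1 / 2) * (Upot ν z + Utau z) + C := by
    intro z hz him
    have hzt : ∀ t : ℝ, z ≠ ((t:ℝ):ℂ) := by
      intro t h
      apply him
      rw [h]
      simp
    have hphine : ∀ t ∈ F, phi z - phi ((t:ℝ):ℂ) ≠ 0 := by
      intro t ht h
      have h2p := two_point hz (hnotE t ht)
      rw [h, zero_mul] at h2p
      have hne : (2 : ℂ) * (z - ((t:ℝ):ℂ)) * phi z * phi ((t:ℝ):ℂ) ≠ 0 :=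
        mul_ne_zero (mul_ne_zero (mul_ne_zero two_ne_zero
          (sub_ne_zero.2 (hzt t))) (phi_ne_zero hz)) (phi_ne_zero (hnotE t ht))
      exact hne h2p.symm
    have i1 : Integrable (fun t : ℝ => gE z ((t:ℝ):ℂ)) μ := by
      apply integrable_helper hFc μ hμF
      intro t ht
      have hnum : ContinuousWithinAt (fun s : ℝ => ‖1 - phi z * phi ((s:ℝ):ℂ)‖) F t :=
        (continuousWithinAt_const.sub (continuousWithinAt_const.mul (hcPhiF t ht))).norm
      have hden : ContinuousWithinAt (fun s : ℝ => ‖phi z - phi ((s:ℝ):ℂ)‖) F t :=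
        (continuousWithinAt_const.sub (hcPhiF t ht)).norm
      have hdenne : ‖phi z - phi ((t:ℝ):ℂ)‖ ≠ 0 :=
        norm_ne_zero_iff.2 (hphine t ht)
      have hqne : ‖1 - phi z * phi ((t:ℝ):ℂ)‖ /
          ‖phi z - phi ((t:ℝ):ℂ)‖ ≠ 0 :=
        div_ne_zero (ne_of_gt (abs_one_sub_pos hz (hnotE t ht))) hdenne
      show ContinuousWithinAt (fun s : ℝ => gE z ((s:ℝ):ℂ)) F t
      simp only [gE]
      exact ((hnum.div hden hdenne).log hqne)
    have i2 : Integrable (fun t : ℝ => Real.log (‖z - ((t:ℝ):ℂ)‖)) μ := by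
      apply integrable_helper hFc μ hμF
      intro t ht
      have h1 : ContinuousWithinAt (fun s : ℝ => ‖z - ((s:ℝ):ℂ)‖) F t :=
        (continuousWithinAt_const.sub
          Complex.continuous_ofReal.continuousAt.continuousWithinAt).norm
      exact h1.log (norm_ne_zero_iff.2 (sub_ne_zero.2 (hzt t)))
    have hpt : ∀ᵐ t ∂μ, 2 * Real.log (‖1 - phi z * phi ((t:ℝ):ℂ)‖) =
        gE z ((t:ℝ):ℂ) + Real.log 2 + Real.log (‖z - ((t:ℝ):ℂ)‖) +
          Real.log (‖phi z‖) + Real.log (‖phi ((t:ℝ):ℂ)‖) :=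
      haeF.mono fun t ht => log_split hz (hnotE t ht) (hzt t)
    have hdouble : (∫ t, (2 : ℝ) * Real.log (‖1 - phi z * phi ((t:ℝ):ℂ)‖) ∂μ) =
        2 * ∫ t, Real.log (‖1 - phi z * phi ((t:ℝ):ℂ)‖) ∂μ :=
      MeasureTheory.integral_const_mul 2 _
    have hcongr := MeasureTheory.integral_congr_ae hpt
    have ia3 : Integrable (fun t : ℝ => gE z ((t:ℝ):ℂ) + Real.log 2) μ :=
      i1.add (integrable_const _)
    have ia2 : Integrable (fun t : ℝ => gE z ((t:ℝ):ℂ) + Real.log 2 +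
        Real.log (‖z - ((t:ℝ):ℂ)‖)) μ := ia3.add i2
    have ia1 : Integrable (fun t : ℝ => gE z ((t:ℝ):ℂ) + Real.log 2 +
        Real.log (‖z - ((t:ℝ):ℂ)‖) + Real.log (‖phi z‖)) μ :=
      ia2.add (integrable_const _)
    have hsplit : (∫ t, (gE z ((t:ℝ):ℂ) + Real.log 2 + Real.log (‖z - ((t:ℝ):ℂ)‖) +
          Real.log (‖phi z‖) + Real.log (‖phi ((t:ℝ):ℂ)‖)) ∂μ) =
        (∫ t, gE z ((t:ℝ):ℂ) ∂μ) + Real.log 2 +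
          (∫ t, Real.log (‖z - ((t:ℝ):ℂ)‖) ∂μ) +
          Real.log (‖phi z‖) + K := by
      rw [MeasureTheory.integral_add ia1 i3, MeasureTheory.integral_add ia2 (integrable_const _),
        MeasureTheory.integral_add ia3 i2, MeasureTheory.integral_add i1 (integrable_const _),
        MeasureTheory.integral_const, MeasureTheory.integral_const]
      simp [measure_univ, hK]
    have hUp : Upot μ z = - ∫ t, Real.log (‖z - ((t:ℝ):ℂ)‖) ∂μ := by
      unfold Upot
      rw [← MeasureTheory.integral_neg]
      congr 1
      funext t
      rw [one_div, Real.log_inv]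
    have hbz := hbal z hz
    have hTau : Real.log (‖phi z‖) = Real.log 2 - Utau z := by
      have := Utau_eq hz
      linarith
    have hfin : 2 * (∫ t, Real.log (‖1 - phi z * phi ((t:ℝ):ℂ)‖) ∂μ) =
        -(Upot ν z + Utau z) + 2 * C := by
      rw [← hdouble, hcongr, hsplit, hbz, hC]
      have hK2 : (∫ t, Real.log (‖z - ((t:ℝ):ℂ)‖) ∂μ) = - Upot μ z := by
        rw [hUp]; ring
      rw [hK2, hTau]
      ring
    linarith
  refine ⟨C, ?_⟩
  intro z hz
  by_cases him : z.im = 0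
  · -- z is real with |z.re| > 1 : approximate from above
    set x₀ := z.re with hx0
    have hzeq : z = ((x₀:ℝ):ℂ) := Complex.ext (by simp [hx0]) (by simp [him])
    have hxIcc : x₀ ∉ Set.Icc (-1:ℝ) 1 := fun h => hz ⟨him, h⟩
    rw [hzeq]
    set zc : ℂ := ((x₀:ℝ):ℂ) with hzc
    set zn : ℕ → ℂ := fun n => zc + ((1/((n:ℝ)+1) : ℝ):ℂ) * I with hzn
    have hpos : ∀ n : ℕ, (0:ℝ) < 1/((n:ℝ)+1) := fun n => by positivity
    have hznim : ∀ n, (zn n).im = 1/((n:ℝ)+1) := by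
      intro n
      simp only [hzn, hzc, Complex.add_im, Complex.ofReal_im, Complex.mul_im,
        Complex.ofReal_re, Complex.I_im, Complex.I_re, Complex.sub_im]
      ring
    have hznE : ∀ n, zn n ∉ Eseg := by
      intro n h
      have h1 := h.1
      rw [hznim n] at h1
      exact absurd h1 (ne_of_gt (hpos n))
    have hkey : ∀ n, (∫ t, Real.log (‖1 - phi (zn n) * phi ((t:ℝ):ℂ)‖) ∂μ) =
        -(1 / 2) * (Upot ν (zn n) + Utau (zn n)) + C := by
      intro n
      have : (zn n).im ≠ 0 := by
        rw [hznim n]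
        exact ne_of_gt (hpos n)
      exact key (zn n) (hznE n) this
    have hztend : Tendsto zn atTop (𝓝 zc) := by
      have h0 : Tendsto (fun n : ℕ => 1 / ((n:ℝ) + 1)) atTop (𝓝 0) :=
        tendsto_one_div_add_atTop_nhds_zero_nat
      have h1 : Tendsto (fun n : ℕ => ((1/((n:ℝ)+1) : ℝ):ℂ)) atTop (𝓝 ((0:ℝ):ℂ)) :=
        (Complex.continuous_ofReal.tendsto 0).comp h0
      have h2 := (tendsto_const_nhds (x := zc) (f := atTop)).add (h1.mul_const I)
      rw [hzn]
      simpa only [Complex.ofReal_zero, zero_mul, add_zero] using h2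
    have hphit : Tendsto (fun n => phi (zn n)) atTop (𝓝 (phi zc)) :=
      ((phi_contAt hxIcc).tendsto).comp hztend
    have hzcE : zc ∉ Eseg := ofReal_not_Eseg hxIcc
    have habszc : 1 < ‖phi zc‖ := one_lt_abs_phi hzcE
    have habst : Tendsto (fun n => ‖phi (zn n)‖) atTop
        (𝓝 (‖phi zc‖)) := hphit.norm
    obtain ⟨M₂, hM₂⟩ := hFc.exists_bound_of_continuousOn hcPhiF
    set M₁ := ‖phi zc‖ + 1 with hM₁
    have hM₁pos : 1 < M₁ := by linarith
    have heM : ∀ᶠ n in atTop, ‖phi (zn n)‖ ≤ M₁ :=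
      Filter.Tendsto.eventually_le_const (by linarith) habst
    have hbnd_int : Integrable (fun t : ℝ =>
        |Real.log (‖phi ((t:ℝ):ℂ)‖ - 1)| +
          |Real.log (1 + M₁ * ‖phi ((t:ℝ):ℂ)‖)|) μ := by
      apply integrable_helper hFc μ hμF
      intro t ht
      have habs : ContinuousWithinAt (fun s : ℝ => ‖phi ((s:ℝ):ℂ)‖) F t :=
        (hcPhiF t ht).norm
      have h1 : (0:ℝ) < ‖phi ((t:ℝ):ℂ)‖ - 1 := by
        linarith [one_lt_abs_phi (hnotE t ht)]
      have h2 : (0:ℝ) < 1 + M₁ * ‖phi ((t:ℝ):ℂ)‖ := by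
        have := norm_nonneg (phi ((t:ℝ):ℂ))
        nlinarith
      exact (((habs.sub continuousWithinAt_const).log (ne_of_gt h1)).abs).add
        (((continuousWithinAt_const.add (continuousWithinAt_const.mul habs)).log
          (ne_of_gt h2)).abs)
    have hvmeas : ∀ᶠ n in atTop, AEStronglyMeasurable
        (fun t : ℝ => Real.log (‖1 - phi (zn n) * phi ((t:ℝ):ℂ)‖)) μ := by
      apply Filter.Eventually.of_forall
      intro n
      apply Integrable.aestronglyMeasurable
      apply integrable_helper hFc μ hμF
      intro t ht
      exact ((continuousWithinAt_const.sub
        (continuousWithinAt_const.mul (hcPhiF t ht))).norm).log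
        (ne_of_gt (abs_one_sub_pos (hznE n) (hnotE t ht)))
    have hvbound : ∀ᶠ n in atTop, ∀ᵐ t ∂μ,
        ‖Real.log (‖1 - phi (zn n) * phi ((t:ℝ):ℂ)‖)‖ ≤
          |Real.log (‖phi ((t:ℝ):ℂ)‖ - 1)| +
            |Real.log (1 + M₁ * ‖phi ((t:ℝ):ℂ)‖)| := by
      refine heM.mono fun n hn => haeF.mono fun t ht => ?_
      have h1 : 1 < ‖phi (zn n)‖ := one_lt_abs_phi (hznE n)
      have h2 : 1 < ‖phi ((t:ℝ):ℂ)‖ := one_lt_abs_phi (hnotE t ht)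
      obtain ⟨hlo, hhi⟩ := abs_one_sub_bounds (phi (zn n)) (phi ((t:ℝ):ℂ)) h1.le
      have hhi2 : ‖1 - phi (zn n) * phi ((t:ℝ):ℂ)‖ ≤
          1 + M₁ * ‖phi ((t:ℝ):ℂ)‖ := by
        have := mul_le_mul_of_nonneg_right hn (norm_nonneg (phi ((t:ℝ):ℂ)))
        linarith
      rw [Real.norm_eq_abs]
      exact log_abs_bound (by linarith) hlo hhi2
    have hvlim_ae : ∀ᵐ t ∂μ, Tendsto
        (fun n => Real.log (‖1 - phi (zn n) * phi ((t:ℝ):ℂ)‖)) atTop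
        (𝓝 (Real.log (‖1 - phi zc * phi ((t:ℝ):ℂ)‖))) := by
      refine haeF.mono fun t ht => ?_
      have hinner : Tendsto (fun n => 1 - phi (zn n) * phi ((t:ℝ):ℂ)) atTop
          (𝓝 (1 - phi zc * phi ((t:ℝ):ℂ))) :=
        tendsto_const_nhds.sub (hphit.mul_const _)
      exact ((Real.continuousAt_log
        (ne_of_gt (abs_one_sub_pos hzcE (hnotE t ht)))).tendsto).comp hinner.norm
    have hvlim : Tendsto
        (fun n => ∫ t, Real.log (‖1 - phi (zn n) * phi ((t:ℝ):ℂ)‖) ∂μ)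
        atTop (𝓝 (∫ t, Real.log (‖1 - phi zc * phi ((t:ℝ):ℂ)‖) ∂μ)) :=
      MeasureTheory.tendsto_integral_filter_of_dominated_convergence _ hvmeas hvbound hbnd_int
        hvlim_ae
    have haeν : ∀ᵐ t ∂ν, t ∈ Set.Icc (-1:ℝ) 1 :=
      ae_mem_of_measure_one ν measurableSet_Icc hνE
    have hx1 : 1 < |x₀| := by
      have := one_lt_sq_of_not_Icc hxIcc
      nlinarith [abs_nonneg x₀, _root_.sq_abs x₀]
    have hUbnd : ∀ n, ∀ᵐ t ∂ν, ‖Real.log (1 / ‖zn n - ((t:ℝ):ℂ)‖)‖ ≤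
        |Real.log (|x₀| - 1)| + |Real.log (|x₀| + 2)| := by
      intro n
      refine haeν.mono fun t ht => ?_
      have htt : |t| ≤ 1 := abs_le.2 ⟨ht.1, ht.2⟩
      have hre : (zn n - ((t:ℝ):ℂ)).re = x₀ - t := by
        simp only [hzn, hzc, Complex.sub_re, Complex.add_re, Complex.ofReal_re, Complex.mul_re,
          Complex.ofReal_im, Complex.I_re, Complex.I_im]
        ring
      have him2 : (zn n - ((t:ℝ):ℂ)).im = 1/((n:ℝ)+1) := by
        simp only [hzn, hzc, Complex.sub_im, Complex.add_im, Complex.ofReal_im, Complex.mul_im,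
          Complex.ofReal_re, Complex.I_im, Complex.I_re]
        ring
      have hlow : |x₀| - 1 ≤ ‖zn n - ((t:ℝ):ℂ)‖ := by
        have h1 : |(zn n - ((t:ℝ):ℂ)).re| ≤ ‖zn n - ((t:ℝ):ℂ)‖ :=
          Complex.abs_re_le_norm _
        rw [hre] at h1
        have h2 : |x₀| - |t| ≤ |x₀ - t| := abs_sub_abs_le_abs_sub x₀ t
        linarith
      have hup : ‖zn n - ((t:ℝ):ℂ)‖ ≤ |x₀| + 2 := by
        have h1 : ‖zn n - ((t:ℝ):ℂ)‖ ≤ |(zn n - ((t:ℝ):ℂ)).re| +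
            |(zn n - ((t:ℝ):ℂ)).im| := Complex.norm_le_abs_re_add_abs_im _
        rw [hre, him2] at h1
        have h2 : |x₀ - t| ≤ |x₀| + |t| := abs_sub x₀ t
        have h3 : |1/((n:ℝ)+1)| ≤ 1 := by
          rw [abs_of_pos (hpos n), div_le_one (by positivity)]
          linarith [Nat.cast_nonneg (α := ℝ) n]
        linarith
      rw [Real.norm_eq_abs, one_div, Real.log_inv, abs_neg]
      exact log_abs_bound (by linarith) hlow hup
    have hznne : ∀ n, ∀ t : ℝ, zn n - ((t:ℝ):ℂ) ≠ 0 := by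
      intro n t h
      have him3 : (zn n - ((t:ℝ):ℂ)).im = 1/((n:ℝ)+1) := by
        simp only [hzn, hzc, Complex.sub_im, Complex.add_im, Complex.ofReal_im, Complex.mul_im,
          Complex.ofReal_re, Complex.I_im, Complex.I_re]
        ring
      rw [h] at him3
      rw [Complex.zero_im] at him3
      exact (ne_of_lt (hpos n)) him3
    have hUmeas : ∀ n, AEStronglyMeasurable
        (fun t : ℝ => Real.log (1 / ‖zn n - ((t:ℝ):ℂ)‖)) ν := by
      intro n
      apply Integrable.aestronglyMeasurable
      apply integrable_helper isCompact_Icc ν hνE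
      intro t _
      have hne : ‖zn n - ((t:ℝ):ℂ)‖ ≠ 0 := norm_ne_zero_iff.2 (hznne n t)
      have habs : ContinuousWithinAt (fun s : ℝ => ‖zn n - ((s:ℝ):ℂ)‖)
          (Set.Icc (-1:ℝ) 1) t :=
        (continuousWithinAt_const.sub
          Complex.continuous_ofReal.continuousAt.continuousWithinAt).norm
      exact (continuousWithinAt_const.div habs hne).log (by
        show (1:ℝ) / ‖zn n - ((t:ℝ):ℂ)‖ ≠ 0
        rw [one_div]
        exact inv_ne_zero hne)
    have hUlim_ae : ∀ᵐ t ∂ν, Tendsto (fun n => Real.log (1 / ‖zn n - ((t:ℝ):ℂ)‖))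
        atTop (𝓝 (Real.log (1 / ‖zc - ((t:ℝ):ℂ)‖))) := by
      refine haeν.mono fun t ht => ?_
      have hnez : zc - ((t:ℝ):ℂ) ≠ 0 := by
        rw [hzc, sub_ne_zero]
        intro h
        have : x₀ = t := by exact_mod_cast h
        rw [this] at hx1
        have := abs_le.2 ⟨ht.1, ht.2⟩
        linarith
      have hne : ‖zc - ((t:ℝ):ℂ)‖ ≠ 0 := norm_ne_zero_iff.2 hnez
      have habs2 : Tendsto (fun n => ‖zn n - ((t:ℝ):ℂ)‖) atTop
          (𝓝 (‖zc - ((t:ℝ):ℂ)‖)) := (hztend.sub_const _).norm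
      have hdiv : Tendsto (fun n => 1 / ‖zn n - ((t:ℝ):ℂ)‖) atTop
          (𝓝 (1 / ‖zc - ((t:ℝ):ℂ)‖)) :=
        tendsto_const_nhds.div habs2 hne
      exact ((Real.continuousAt_log (by
        rw [one_div]
        exact inv_ne_zero hne)).tendsto).comp hdiv
    have hUlim : Tendsto (fun n => Upot ν (zn n)) atTop (𝓝 (Upot ν zc)) := by
      unfold Upot
      exact MeasureTheory.tendsto_integral_filter_of_dominated_convergence _
        (Filter.Eventually.of_forall hUmeas) (Filter.Eventually.of_forall hUbnd)
        (integrable_const _) hUlim_ae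
    have hTlim : Tendsto (fun n => Utau (zn n)) atTop (𝓝 (Utau zc)) := by
      have h1 : ∀ n, Utau (zn n) = Real.log 2 - Real.log (‖phi (zn n)‖) :=
        fun n => Utau_eq (hznE n)
      have h2 : Utau zc = Real.log 2 - Real.log (‖phi zc‖) := Utau_eq hzcE
      simp only [h1, h2]
      exact Filter.Tendsto.const_sub _
        (((Real.continuousAt_log (by linarith)).tendsto).comp habst)
    have hrhs : Tendsto (fun n => -(1 / 2) * (Upot ν (zn n) + Utau (zn n)) + C) atTop
        (𝓝 (-(1 / 2) * (Upot ν zc + Utau zc) + C)) :=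
      (((hUlim.add hTlim).const_mul _).add_const _)
    have hlhs : Tendsto (fun n => -(1 / 2) * (Upot ν (zn n) + Utau (zn n)) + C) atTop
        (𝓝 (∫ t, Real.log (‖1 - phi zc * phi ((t:ℝ):ℂ)‖) ∂μ)) := by
      have h := hvlim
      simp only [hkey] at h
      exact h
    exact tendsto_nhds_unique hlhs hrhs
  · exact key z hz him
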